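/- Let p,q,r,s,u,v,x,y,z,a,b,c be real numbers, and set A₁ = diag(p,q,r), A₂ = diag(s,u,v), A₃ = diag(x,y,z), B₁₂ = a·E₁₂, B₁₃ = b·E₁₃, B₂₃ = c·E₂₃ (3×3 real matrices). With the twelve functions p(t) = s(t) = x(t) = y(t) = 1, q(t) = 1+t, r(t) = 1+2t, v(t) = 1−0.9t, a(t) = b(t) = c(t) = √(3t), u(t) = (6+14.7t²)/(6(1+t)), z(t) = (6+12.3t²)/(6(1+2t)(1−0.9t)) evaluated at any t ∈ [0,1], the matrix T(A₁,A₂,A₃,B₁₂,B₁₃,B₂₃) := {A₁,A₂,A₃} − {A₁,B₂₃,B₂₃ᵀ} − {A₂,B₁₃,B₁₃ᵀ} − {A₃,B₁₂,B₁₂ᵀ} + {B₁₃,B₁₂ᵀ,B₂₃ᵀ} + {B₁₃ᵀ,B₁₂,B₂₃} equals K(t)·Id₃ where K(t) = 6 − 18t + 2.7t² + 6t√(3t). -/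

import Mathlib

open Matrix

/-- The full symmetrizer {X,Y,Z} = sum over all six orderings. -/
def sym3 {m : Type*} [Fintype m] [DecidableEq m] (X Y Z : Matrix m m ℝ) : Matrix m m ℝ :=
  X * Y * Z + X * Z * Y + Y * X * Z + Y * Z * X + Z * X * Y + Z * Y * X

/-- The pointwise matrix form of `(√-1 F_H)³` in dimension three. -/
def TvbMA {m : Type*} [Fintype m] [DecidableEq m]
    (A₁ A₂ A₃ B₁₂ B₁₃ B₂₃ : Matrix m m ℝ) : Matrix m m ℝ :=
  sym3 A₁ A₂ A₃ - sym3 A₁ B₂₃ B₂₃ᵀ - sym3 A₂ B₁₃ B₁₃ᵀ - sym3 A₃ B₁₂ B₁₂ᵀ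
    + sym3 B₁₃ B₁₂ᵀ B₂₃ᵀ + sym3 B₁₃ᵀ B₁₂ B₂₃

namespace VbMAPath

noncomputable section

def p (_t : ℝ) : ℝ := 1
def s (_t : ℝ) : ℝ := 1
def x (_t : ℝ) : ℝ := 1
def y (_t : ℝ) : ℝ := 1
def q (t : ℝ) : ℝ := 1 + t
def r (t : ℝ) : ℝ := 1 + 2 * t
def v (t : ℝ) : ℝ := 1 - 0.9 * t
def a (t : ℝ) : ℝ := Real.sqrt (3 * t)
def b (t : ℝ) : ℝ := Real.sqrt (3 * t)
def c (t : ℝ) : ℝ := Real.sqrt (3 * t)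
def u (t : ℝ) : ℝ := (6 + 14.7 * t ^ 2) / (6 * (1 + t))
def z (t : ℝ) : ℝ := (6 + 12.3 * t ^ 2) / (6 * (1 + 2 * t) * (1 - 0.9 * t))
def K (t : ℝ) : ℝ := 6 - 18 * t + 2.7 * t ^ 2 + 6 * t * Real.sqrt (3 * t)


private lemma diag3_eq (d₁ d₂ d₃ : ℝ) :
    Matrix.diagonal ![d₁, d₂, d₃] = !![d₁,0,0; 0,d₂,0; 0,0,d₃] := by
  ext i j; fin_cases i <;> fin_cases j <;> simp [Matrix.diagonal, Matrix.vecHead, Matrix.vecTail]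

private lemma std01_eq (a : ℝ) :
    a • Matrix.single (0 : Fin 3) (1 : Fin 3) (1 : ℝ) = !![0,a,0; 0,0,0; 0,0,0] := by
  ext i j; fin_cases i <;> fin_cases j <;> simp [Matrix.single, Matrix.vecHead, Matrix.vecTail]

private lemma std02_eq (b : ℝ) :
    b • Matrix.single (0 : Fin 3) (2 : Fin 3) (1 : ℝ) = !![0,0,b; 0,0,0; 0,0,0] := by
  ext i j; fin_cases i <;> fin_cases j <;> simp [Matrix.single, Matrix.vecHead, Matrix.vecTail]

private lemma std12_eq (c : ℝ) :
    c • Matrix.single (1 : Fin 3) (2 : Fin 3) (1 : ℝ) = !![0,0,0; 0,0,c; 0,0,0] := by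
  ext i j; fin_cases i <;> fin_cases j <;> simp [Matrix.single, Matrix.vecHead, Matrix.vecTail]

set_option maxHeartbeats 3200000 in
private lemma key (p q r s u v x y z a b c : ℝ) :
    TvbMA !![p,0,0; 0,q,0; 0,0,r] !![s,0,0; 0,u,0; 0,0,v] !![x,0,0; 0,y,0; 0,0,z]
      !![0,a,0; 0,0,0; 0,0,0] !![0,0,b; 0,0,0; 0,0,0] !![0,0,0; 0,0,c; 0,0,0] =
    !![6*p*s*x - b^2*(2*s+v) - a^2*(2*x+y) + 2*a*b*c, 0, 0;
       0, 6*q*u*y - c^2*(2*q+r) - a^2*(x+2*y) + 2*a*b*c, 0;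
       0, 0, 6*r*v*z - c^2*(q+2*r) - b^2*(s+2*v) + 2*a*b*c] := by
  ext i j
  fin_cases i <;> fin_cases j <;>
    simp [TvbMA, sym3, Matrix.mul_apply, Fin.sum_univ_three, Matrix.transpose_apply,
      Matrix.add_apply, Matrix.sub_apply, Matrix.vecHead, Matrix.vecTail,
      Matrix.vecMul, dotProduct] <;> ring


private lemma entry1 (t : ℝ) (ht0 : 0 ≤ t) :
    6 * p t * s t * x t - (b t)^2 * (2 * s t + v t) - (a t)^2 * (2 * x t + y t)
      + 2 * a t * b t * c t = K t := by
  have hst : Real.sqrt (3 * t) * Real.sqrt (3 * t) = 3 * t :=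
    Real.mul_self_sqrt (by linarith)
  simp only [p, s, x, y, v, a, b, c, K]
  linear_combination (2 * Real.sqrt (3 * t) - 6 + 0.9 * t) * hst

private lemma entry2 (t : ℝ) (ht0 : 0 ≤ t) (hq : (1 : ℝ) + t ≠ 0) :
    6 * q t * u t * y t - (c t)^2 * (2 * q t + r t) - (a t)^2 * (x t + 2 * y t)
      + 2 * a t * b t * c t = K t := by
  have hst : Real.sqrt (3 * t) * Real.sqrt (3 * t) = 3 * t :=
    Real.mul_self_sqrt (by linarith)
  have hu : u t * (6 * (1 + t)) = 6 + 14.7 * t ^ 2 :=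
    div_mul_cancel₀ _ (by positivity)
  simp only [q, r, x, y, a, b, c, K]
  linear_combination hu + (2 * Real.sqrt (3 * t) - 6 - 4 * t) * hst

private lemma entry3 (t : ℝ) (ht0 : 0 ≤ t) (hr : (1 : ℝ) + 2 * t ≠ 0)
    (hv : (1 : ℝ) - 0.9 * t ≠ 0) :
    6 * r t * v t * z t - (c t)^2 * (q t + 2 * r t) - (b t)^2 * (s t + 2 * v t)
      + 2 * a t * b t * c t = K t := by
  have hst : Real.sqrt (3 * t) * Real.sqrt (3 * t) = 3 * t :=
    Real.mul_self_sqrt (by linarith)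
  have hz : z t * (6 * (1 + 2 * t) * (1 - 0.9 * t)) = 6 + 12.3 * t ^ 2 :=
    div_mul_cancel₀ _ (by
      intro h
      rcases mul_eq_zero.mp h with h' | h'
      · rcases mul_eq_zero.mp h' with h'' | h''
        · norm_num at h''
        · exact hr h''
      · exact hv h')
  simp only [q, r, s, v, a, b, c, K]
  linear_combination hz + (2 * Real.sqrt (3 * t) - 6 - 3.2 * t) * hst

set_option maxHeartbeats 3200000 in
theorem stmt5 (t : ℝ) (ht : t ∈ Set.Icc (0 : ℝ) 1) :
    TvbMA (Matrix.diagonal ![p t, q t, r t]) (Matrix.diagonal ![s t, u t, v t])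
      (Matrix.diagonal ![x t, y t, z t])
      (a t • Matrix.single (0 : Fin 3) (1 : Fin 3) (1 : ℝ))
      (b t • Matrix.single (0 : Fin 3) (2 : Fin 3) (1 : ℝ))
      (c t • Matrix.single (1 : Fin 3) (2 : Fin 3) (1 : ℝ)) =
    K t • (1 : Matrix (Fin 3) (Fin 3) ℝ) := by
  obtain ⟨ht0, ht1⟩ := ht
  have hst : Real.sqrt 3 * Real.sqrt t * (Real.sqrt 3 * Real.sqrt t) = 3 * t := by
    have h3 : Real.sqrt 3 * Real.sqrt 3 = 3 := Real.mul_self_sqrt (by norm_num)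
    have htt : Real.sqrt t * Real.sqrt t = t := Real.mul_self_sqrt ht0
    nlinarith [h3, htt]
  have hq : (1 : ℝ) + t ≠ 0 := by linarith
  have hr : (1 : ℝ) + 2 * t ≠ 0 := by linarith
  have hv : (1 : ℝ) - 0.9 * t ≠ 0 := by nlinarith
  rw [diag3_eq, diag3_eq, diag3_eq, std01_eq, std02_eq, std12_eq, key]
  ext i j
  fin_cases i <;> fin_cases j <;>
    simp [Matrix.one_apply, Matrix.vecHead, Matrix.vecTail] <;>
    first
    | linear_combination entry1 t ht0
    | linear_combination entry2 t ht0 hq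
    | linear_combination entry3 t ht0 hr hv

end

end VbMAPath
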